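/- The Urysohn identification update with α = 1 coincides with a Kaczmarz projection step for the linear system M̃ Z = Ỹ: since the row of M̃ corresponding to output y_i has exactly m ones (at positions n(j−1)+k_{i−j+1}, j = 1,…,m) and squared norm m, the Kaczmarz update X' = X + ((y_i − ⟨row, X⟩)/m)·row adds (y_i − ŷ_i)/m to exactly the entries Z_{n(j−1)+k_{i−j+1}}, j = 1,…,m, and leaves all other entries unchanged. -/
import Mathlib

/-- the Urysohn identification update with `α = 1` coincides with a Kaczmarz
projection step for the linear system `M̃ Z = Ỹ`. The row of `M̃` corresponding to output
`y_i` has exactly `m` ones (at the positions `(j, k_{i-j+1})`, one per row block) and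
squared norm `m`; the Kaczmarz update `X' = X + ((y_i − ⟨row, X⟩)/m)·row` adds
`(y_i − ŷ_i)/m` to exactly the entries `Z_{(j, k_{i-j+1})}` and leaves all other entries
unchanged. -/
theorem urysohn_update_is_kaczmarz (m n : ℕ) (hm : 0 < m) (ks : Fin m → Fin n)
    (Z : Fin m × Fin n → ℝ) (y : ℝ)
    (row : Fin m × Fin n → ℝ)
    (hrow : ∀ jc : Fin m × Fin n, row jc = if jc.2 = ks jc.1 then 1 else 0)
    (yhat : ℝ) (hyhat : yhat = ∑ j : Fin m, Z (j, ks j))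
    (X' : Fin m × Fin n → ℝ)
    (hX' : X' = fun jc => Z jc + ((y - yhat) / m) * row jc) :
    (∑ jc : Fin m × Fin n, row jc ^ 2) = (m : ℝ) ∧
    (∑ jc : Fin m × Fin n, row jc * Z jc) = yhat ∧
    (∀ j : Fin m, X' (j, ks j) = Z (j, ks j) + (y - yhat) / m) ∧
    (∀ j : Fin m, ∀ c : Fin n, c ≠ ks j → X' (j, c) = Z (j, c)) := by
  refine ⟨?_, ?_, ?_, ?_⟩
  · rw [Fintype.sum_prod_type]
    simp [hrow]
  · rw [Fintype.sum_prod_type, hyhat]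
    refine Finset.sum_congr rfl fun j _ => ?_
    simp [hrow]
  · intro j
    simp [hX', hrow]
  · intro j c hc
    simp [hX', hrow, hc]
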